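/- Let α,β,μ be reals with α,β≠0 and Δ = α²+β²−2μ² > 0. Then ∂_α M[B_μ] = −16μ²βα/(Δ² + 8μ²β²), which is negative for α,β,μ>0. -/

import Mathlib

open Real

/-- Mass of the Gardner breather as a function of the parameters `α, β, μ`. -/
noncomputable def breatherMass (α β μ : ℝ) : ℝ :=
  4 * β + 2 * Real.sqrt 2 * μ *
    Real.arctan (2 * Real.sqrt 2 * μ * β / (α ^ 2 + β ^ 2 - 2 * μ ^ 2))

theorem gardner_breather_mass_deriv_alpha (α β μ : ℝ) (hα : α ≠ 0) (hβ : β ≠ 0)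
    (hΔ : 0 < α ^ 2 + β ^ 2 - 2 * μ ^ 2) :
    HasDerivAt (fun a => breatherMass a β μ)
      (-16 * μ ^ 2 * β * α /
        ((α ^ 2 + β ^ 2 - 2 * μ ^ 2) ^ 2 + 8 * μ ^ 2 * β ^ 2)) α ∧
    (0 < α → 0 < β → 0 < μ →
      -16 * μ ^ 2 * β * α /
        ((α ^ 2 + β ^ 2 - 2 * μ ^ 2) ^ 2 + 8 * μ ^ 2 * β ^ 2) < 0) := by
  set Δ : ℝ := α ^ 2 + β ^ 2 - 2 * μ ^ 2 with hΔdef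
  have hΔ0 : Δ ≠ 0 := ne_of_gt hΔ
  have hs2 : Real.sqrt 2 ^ 2 = 2 := Real.sq_sqrt (by norm_num)
  constructor
  · -- derivative
    have hden : HasDerivAt (fun a : ℝ => a ^ 2 + β ^ 2 - 2 * μ ^ 2) (2 * α) α := by
      have := ((hasDerivAt_pow 2 α).add_const (β ^ 2)).sub_const (2 * μ ^ 2)
      simpa using this
    have hu : HasDerivAt (fun a : ℝ => 2 * Real.sqrt 2 * μ * β / (a ^ 2 + β ^ 2 - 2 * μ ^ 2))
        ((0 * Δ - 2 * Real.sqrt 2 * μ * β * (2 * α)) / Δ ^ 2) α :=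
      (hasDerivAt_const α (2 * Real.sqrt 2 * μ * β)).div hden hΔ0
    set u : ℝ := 2 * Real.sqrt 2 * μ * β / Δ with hu_def
    have harctan : HasDerivAt Real.arctan (1 / (1 + u ^ 2)) u := Real.hasDerivAt_arctan u
    have hcomp := harctan.comp α hu
    have hfinal := (hcomp.const_mul (2 * Real.sqrt 2 * μ)).const_add (4 * β)
    have heq : 2 * Real.sqrt 2 * μ * (1 / (1 + u ^ 2) *
        ((0 * Δ - 2 * Real.sqrt 2 * μ * β * (2 * α)) / Δ ^ 2)) =
        -16 * μ ^ 2 * β * α / (Δ ^ 2 + 8 * μ ^ 2 * β ^ 2) := by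
      have h1u : 1 + u ^ 2 = (Δ ^ 2 + 8 * μ ^ 2 * β ^ 2) / Δ ^ 2 := by
        rw [hu_def]
        have m : Real.sqrt 2 * Real.sqrt 2 = 2 := Real.mul_self_sqrt (by norm_num)
        field_simp
        linear_combination (4 * μ ^ 2 * β ^ 2) * m
      rw [h1u]
      have hpos : Δ ^ 2 + 8 * μ ^ 2 * β ^ 2 ≠ 0 := by positivity
      have m : Real.sqrt 2 * Real.sqrt 2 = 2 := Real.mul_self_sqrt (by norm_num)
      field_simp
      linear_combination (-8*μ^2*β*α) * m
    rw [heq] at hfinal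
    exact hfinal
  · intro hα' hβ' hμ'
    apply div_neg_of_neg_of_pos
    · have h : 0 < 16 * μ ^ 2 * β * α := by positivity
      linarith
    · positivity
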